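/- Let (V,⟨·,·⟩) be a finite-dimensional symplectic vector space over a field F, and suppose V = ⊕_{i∈I} V_i is a direct sum of linear subspaces such that for every i∈I there is a unique j∈I with ⟨V_i,V_j⟩ ≠ 0. Then there exists a basis {u_1,u_1',…,u_n,u_n'} of V contained in ∪_i V_i such that ⟨u_i,u_j⟩ = ⟨u_i',u_j'⟩ = 0 for all i,j, and ⟨u_i,u_j'⟩ = δ_{ij}. -/

import Mathlib

open Module

theorem sympl_aux {F : Type*} [Field F] {V : Type*} [AddCommGroup V] [Module F V]
    [FiniteDimensional F V] (B : LinearMap.BilinForm F V)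
    (halt : ∀ v : V, B v v = 0)
    {I : Type*} (Vi : I → Submodule F V)
    (huniq' : ∀ i j k : I, (∃ a ∈ Vi i, ∃ b ∈ Vi j, B a b ≠ 0) →
        (∃ a ∈ Vi i, ∃ b ∈ Vi k, B a b ≠ 0) → j = k) :
    ∀ (m : ℕ) (W : Submodule F V), Module.finrank F W = m →
    (∀ v ∈ W, (∀ w ∈ W, B v w = 0) → v = 0) →
    (∀ w ∈ W, w ∈ ⨆ i, (Vi i ⊓ W)) →
    ∃ (n : ℕ) (e : Fin n × Bool → V),
      (∀ p, e p ∈ W) ∧ (∀ p, ∃ i, e p ∈ Vi i) ∧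
      (∀ i j, B (e (i,false)) (e (j,false)) = 0) ∧
      (∀ i j, B (e (i,true)) (e (j,true)) = 0) ∧
      (∀ i j, B (e (i,false)) (e (j,true)) = if i = j then 1 else 0) ∧
      W ≤ Submodule.span F (Set.range e) := by
  have hskew : ∀ v w : V, B v w = - B w v := by
    intro v w
    have h := halt (v + w)
    simp only [map_add, LinearMap.add_apply, halt v, halt w, zero_add, add_zero] at h
    linear_combination h
  intro m
  induction m using Nat.strong_induction_on with
  | _ m IH =>
  intro W hrank hnd hsup
  by_cases hW : W = ⊥
  · exact ⟨0, fun _ => 0, fun p => p.1.elim0, fun p => p.1.elim0, fun i => i.elim0,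
      fun i => i.elim0, fun i => i.elim0, hW ▸ bot_le⟩
  · obtain ⟨v, hvW, hv0⟩ := Submodule.ne_bot_iff W |>.1 hW
    obtain ⟨f, hf, hfsum⟩ := (Submodule.mem_iSup_iff_exists_finsupp _ _).1 (hsup v hvW)
    have hex : ∃ i₀, f i₀ ≠ 0 := by
      by_contra hc
      push_neg at hc
      have : f = 0 := Finsupp.ext hc
      rw [this] at hfsum
      simp at hfsum
      exact hv0 hfsum.symm
    obtain ⟨i₀, hfi₀⟩ := hex
    set u : V := f i₀ with hu
    have huVi : u ∈ Vi i₀ := (Submodule.mem_inf.1 (hf i₀)).1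
    have huW : u ∈ W := (Submodule.mem_inf.1 (hf i₀)).2
    have hBexw : ∃ w ∈ W, B u w ≠ 0 := by
      by_contra hc
      push_neg at hc
      exact hfi₀ (hnd u huW hc)
    obtain ⟨w, hwW, hBuw⟩ := hBexw
    obtain ⟨g, hg, hgsum⟩ := (Submodule.mem_iSup_iff_exists_finsupp _ _).1 (hsup w hwW)
    have hexj : ∃ j₀, B u (g j₀) ≠ 0 := by
      by_contra hc
      push_neg at hc
      apply hBuw
      rw [← hgsum, Finsupp.sum, map_sum]
      exact Finset.sum_eq_zero fun j _ => hc j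
    obtain ⟨j₀, hc0⟩ := hexj
    set u'' : V := g j₀ with hu''
    have hu''Vj : u'' ∈ Vi j₀ := (Submodule.mem_inf.1 (hg j₀)).1
    have hu''W : u'' ∈ W := (Submodule.mem_inf.1 (hg j₀)).2
    set c : F := B u u'' with hcdef
    set u' : V := c⁻¹ • u'' with hu'
    have hu'Vj : u' ∈ Vi j₀ := Submodule.smul_mem _ _ hu''Vj
    have hu'W : u' ∈ W := Submodule.smul_mem _ _ hu''W
    have hBuu' : B u u' = 1 := by
      rw [hu', map_smul, smul_eq_mul, ← hcdef, inv_mul_cancel₀ hc0]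
    have hBu'u : B u' u = -1 := by rw [hskew, hBuu']
    have hij : ∃ a ∈ Vi i₀, ∃ b ∈ Vi j₀, B a b ≠ 0 := ⟨u, huVi, u'', hu''Vj, hc0⟩
    have hji : ∃ a ∈ Vi j₀, ∃ b ∈ Vi i₀, B a b ≠ 0 :=
      ⟨u'', hu''Vj, u, huVi, by rw [hskew]; simpa using hc0⟩
    have hk1 : ∀ k, ∀ x ∈ Vi k, B u x ≠ 0 → k = j₀ := fun k x hx h =>
      huniq' i₀ k j₀ ⟨u, huVi, x, hx, h⟩ hij
    have hk2 : ∀ k, ∀ x ∈ Vi k, B u' x ≠ 0 → k = i₀ := fun k x hx h =>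
      huniq' j₀ k i₀ ⟨u', hu'Vj, x, hx, h⟩ hji
    set W' : Submodule F V := W ⊓ LinearMap.ker (B u) ⊓ LinearMap.ker (B u') with hW'
    have hmemW' : ∀ x : V, x ∈ W' ↔ x ∈ W ∧ B u x = 0 ∧ B u' x = 0 := by
      intro x
      simp [hW', Submodule.mem_inf, LinearMap.mem_ker, and_assoc]
    set P : V →ₗ[F] V := LinearMap.id + ((B u').smulRight u) - ((B u).smulRight u') with hP
    have hPapp : ∀ x : V, P x = x + (B u' x) • u - (B u x) • u' := by
      intro x
      simp [hP, LinearMap.sub_apply, LinearMap.add_apply, LinearMap.smulRight_apply,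
        LinearMap.id_apply]
    have hPW' : ∀ x ∈ W, P x ∈ W' := by
      intro x hx
      rw [hmemW', hPapp]
      refine ⟨Submodule.sub_mem _ (Submodule.add_mem _ hx (Submodule.smul_mem _ _ huW))
        (Submodule.smul_mem _ _ hu'W), ?_, ?_⟩
      · simp only [map_sub, map_add, map_smul, smul_eq_mul, halt u, hBuu', mul_zero, mul_one]
        ring
      · simp only [map_sub, map_add, map_smul, smul_eq_mul, halt u', hBu'u, mul_zero]
        ring
    have hPfix : ∀ x : V, B u x = 0 → B u' x = 0 → P x = x := by
      intro x h1 h2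
      rw [hPapp, h1, h2]
      simp
    have hPVk : ∀ k, ∀ x ∈ Vi k, P x ∈ Vi k := by
      intro k x hx
      rw [hPapp]
      have h1 : (B u' x) • u ∈ Vi k := by
        by_cases h : B u' x = 0
        · simp [h]
        · rw [hk2 k x hx h]
          exact Submodule.smul_mem _ _ huVi
      have h2 : (B u x) • u' ∈ Vi k := by
        by_cases h : B u x = 0
        · simp [h]
        · rw [hk1 k x hx h]
          exact Submodule.smul_mem _ _ hu'Vj
      exact Submodule.sub_mem _ (Submodule.add_mem _ hx h1) h2
    have hsup' : ∀ x ∈ W', x ∈ ⨆ k, (Vi k ⊓ W') := by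
      intro x hx
      obtain ⟨hxW, hxu, hxu'⟩ := (hmemW' x).1 hx
      obtain ⟨q, hq, hqsum⟩ := (Submodule.mem_iSup_iff_exists_finsupp _ _).1 (hsup x hxW)
      have hxeq : x = ∑ k ∈ q.support, P (q k) := by
        rw [← map_sum]
        have : ∑ k ∈ q.support, q k = x := hqsum
        rw [this, hPfix x hxu hxu']
      rw [hxeq]
      refine Submodule.sum_mem _ fun k _ => Submodule.mem_iSup_of_mem k ?_
      exact Submodule.mem_inf.2 ⟨hPVk k (q k) (Submodule.mem_inf.1 (hq k)).1,
        hPW' (q k) (Submodule.mem_inf.1 (hq k)).2⟩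
    have hnd' : ∀ v ∈ W', (∀ w ∈ W', B v w = 0) → v = 0 := by
      intro y hy hyw
      obtain ⟨hyW, hyu, hyu'⟩ := (hmemW' y).1 hy
      have h2 : B y u = 0 := by rw [hskew, hyu, neg_zero]
      have h3 : B y u' = 0 := by rw [hskew, hyu', neg_zero]
      apply hnd y hyW
      intro z hz
      have h4 := hyw (P z) (hPW' z hz)
      rw [hPapp] at h4
      simpa [map_sub, map_add, map_smul, smul_eq_mul, h2, h3] using h4
    have hW'le : W' ≤ W := fun x hx => ((hmemW' x).1 hx).1
    have hu'notW' : u' ∉ W' := by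
      intro h
      have := ((hmemW' u').1 h).2.1
      rw [hBuu'] at this
      exact one_ne_zero this
    have hltW : W' < W := lt_of_le_of_ne hW'le fun h => hu'notW' (h ▸ hu'W)
    have hlt : finrank F W' < m := hrank ▸ Submodule.finrank_lt_finrank_of_lt hltW
    obtain ⟨n, e, heW', heVi, h00, h11, h01, hspan⟩ :=
      IH (finrank F W') hlt W' rfl hnd' hsup'
    have heu : ∀ p, B u (e p) = 0 := fun p => ((hmemW' _).1 (heW' p)).2.1
    have heu' : ∀ p, B u' (e p) = 0 := fun p => ((hmemW' _).1 (heW' p)).2.2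
    have heu2 : ∀ p, B (e p) u = 0 := fun p => by rw [hskew, heu p, neg_zero]
    have heu2' : ∀ p, B (e p) u' = 0 := fun p => by rw [hskew, heu' p, neg_zero]
    refine ⟨n + 1, fun p => Fin.cons (α := fun _ => V) (if p.2 then u' else u)
      (fun i => e (i, p.2)) p.1, ?_, ?_, ?_, ?_, ?_, ?_⟩
    · rintro ⟨i, b⟩
      induction i using Fin.cases with
      | zero =>
        cases b
        · simpa using huW
        · simpa using hu'W
      | succ i => simpa [Fin.cons_succ] using hW'le (heW' (i, b))
    · rintro ⟨i, b⟩
      induction i using Fin.cases with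
      | zero => cases b
                · exact ⟨i₀, by simpa using huVi⟩
                · exact ⟨j₀, by simpa using hu'Vj⟩
      | succ i => simpa [Fin.cons_succ] using heVi (i, b)
    · intro i j
      induction i using Fin.cases with
      | zero =>
        induction j using Fin.cases with
        | zero => simpa using halt u
        | succ j => simpa [Fin.cons_succ] using heu (j, false)
      | succ i =>
        induction j using Fin.cases with
        | zero => simpa [Fin.cons_succ] using heu2 (i, false)
        | succ j => simpa [Fin.cons_succ] using h00 i j
    · intro i j
      induction i using Fin.cases with
      | zero =>
        induction j using Fin.cases with
        | zero => simpa using halt u'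
        | succ j => simpa [Fin.cons_succ] using heu' (j, true)
      | succ i =>
        induction j using Fin.cases with
        | zero => simpa [Fin.cons_succ] using heu2' (i, true)
        | succ j => simpa [Fin.cons_succ] using h11 i j
    · intro i j
      induction i using Fin.cases with
      | zero =>
        induction j using Fin.cases with
        | zero => simpa using hBuu'
        | succ j => simp [Fin.cons_succ, (Fin.succ_ne_zero j).symm, heu (j, true)]
      | succ i =>
        induction j using Fin.cases with
        | zero => simp [Fin.cons_succ, Fin.succ_ne_zero i, heu2' (i, false)]
        | succ j => simpa [Fin.cons_succ, Fin.succ_inj] using h01 i j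
    · intro x hx
      have hx' : x = P x - (B u' x) • u + (B u x) • u' := by
        rw [hPapp]
        abel
      have hrange : Set.range e ⊆ Set.range (fun p : Fin (n+1) × Bool =>
          Fin.cons (α := fun _ => V) (if p.2 then u' else u) (fun i => e (i, p.2)) p.1) := by
        rintro _ ⟨⟨i, b⟩, rfl⟩
        exact ⟨(i.succ, b), by simp [Fin.cons_succ]⟩
      rw [hx']
      refine Submodule.add_mem _ (Submodule.sub_mem _ ?_ ?_) ?_
      · exact Submodule.span_mono hrange (hspan (hPW' x hx))
      · exact Submodule.smul_mem _ _ (Submodule.subset_span ⟨(0, false), by simp⟩)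
      · exact Submodule.smul_mem _ _ (Submodule.subset_span ⟨(0, true), by simp⟩)

/-- Lemma 2.1: a finite-dimensional symplectic space which is a direct sum of
subspaces, each pairing nontrivially with exactly one other (or itself), has a
symplectic basis consisting of elements of the given subspaces. -/
theorem symplectic_homogeneous_basis
    (F : Type*) [Field F] (V : Type*) [AddCommGroup V] [Module F V]
    [FiniteDimensional F V]
    (B : LinearMap.BilinForm F V)
    (halt : ∀ v : V, B v v = 0)
    (hnd : ∀ v : V, (∀ w : V, B v w = 0) → v = 0)
    (I : Type*) [DecidableEq I] (Vi : I → Submodule F V)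
    (hint : DirectSum.IsInternal Vi)
    (huniq : ∀ i : I, ∃! j : I, ∃ a ∈ Vi i, ∃ b ∈ Vi j, B a b ≠ 0) :
    ∃ (n : ℕ) (b : Basis (Fin n × Bool) F V),
      (∀ p : Fin n × Bool, ∃ i : I, b p ∈ Vi i) ∧
      (∀ i j : Fin n, B (b (i, false)) (b (j, false)) = 0) ∧
      (∀ i j : Fin n, B (b (i, true)) (b (j, true)) = 0) ∧
      (∀ i j : Fin n, B (b (i, false)) (b (j, true)) = if i = j then 1 else 0) := by
  have huniq' : ∀ i j k : I, (∃ a ∈ Vi i, ∃ b ∈ Vi j, B a b ≠ 0) →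
      (∃ a ∈ Vi i, ∃ b ∈ Vi k, B a b ≠ 0) → j = k := by
    intro i j k h1 h2
    obtain ⟨j', _, hju⟩ := huniq i
    rw [hju j h1, hju k h2]
  have htop : ⨆ i, Vi i = (⊤ : Submodule F V) := hint.submodule_iSup_eq_top
  obtain ⟨n, e, heW, heVi, h00, h11, h01, hspan⟩ :=
    sympl_aux B halt Vi huniq' (Module.finrank F (⊤ : Submodule F V)) ⊤ rfl
      (fun v _ h => hnd v fun w => h w Submodule.mem_top)
      (fun w _ => by simp [htop])
  have hli : LinearIndependent F e := by
    rw [Fintype.linearIndependent_iff]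
    intro g hg
    rintro ⟨k, b⟩
    cases b
    · have h := congrArg (fun x => B x (e (k, true))) hg
      simp only [map_sum, map_smul, LinearMap.sum_apply, LinearMap.smul_apply,
        smul_eq_mul, map_zero, LinearMap.zero_apply] at h
      rw [Finset.sum_eq_single ((k, false) : Fin n × Bool)] at h
      · simpa [h01] using h
      · rintro ⟨j, c⟩ _ hne
        cases c
        · have hjk : j ≠ k := fun hh => hne (by rw [hh])
          simp [h01, hjk]
        · simp [h11]
      · intro h'; exact absurd (Finset.mem_univ _) h'
    · have h := congrArg (fun x => B (e (k, false)) x) hg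
      simp only [map_sum, map_smul, smul_eq_mul, map_zero] at h
      rw [Finset.sum_eq_single ((k, true) : Fin n × Bool)] at h
      · simpa [h01] using h
      · rintro ⟨j, c⟩ _ hne
        cases c
        · simp [h00]
        · have hjk : k ≠ j := fun hh => hne (by rw [hh])
          simp [h01, hjk]
      · intro h'; exact absurd (Finset.mem_univ _) h'
  refine ⟨n, Basis.mk hli hspan, ?_, ?_, ?_, ?_⟩
  · intro p; simpa [Basis.mk_apply] using heVi p
  · intro i j; simpa [Basis.mk_apply] using h00 i j
  · intro i j; simpa [Basis.mk_apply] using h11 i j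
  · intro i j; simpa [Basis.mk_apply] using h01 i j
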